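/- For every n ≥ 1 and every x ≥ 0, the second moment of K_n^μ satisfies K_n^μ(ξ²; x) = x² + [e_μ(nx)(2Q'(1) + Q(1)) + 2μ Q(−1) e_μ(−nx)] x / (Q(1) n e_μ(nx)) + (Λ_μ Q)(1) e_μ(−nx) / (Q(1) n² e_μ(nx)) + [2Q''(1) − (Λ_μ Q)'(1) − (Λ_μ Q')(1) + Q'(1) − 2μ Q'(−1)] (e_μ(nx) − e_μ(−nx)) / (Q(1) n² e_μ(nx)) + [(Λ_μ² Q)(1) + 2μ (Λ_μ Q)(−1)] / (Q(1) n²), where K_n^μ(ξ²;x) denotes K_n^μ applied to ξ ↦ ξ² and Λ_μ² denotes the Dunkl operator applied twice. -/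

import Mathlib

open scoped BigOperators

/-- The Dunkl coefficients γ_μ(i). -/
noncomputable def gammaMu (μ : ℝ) (i : ℕ) : ℝ :=
  if Even i then
    2 ^ i * (Nat.factorial (i / 2)) *
      Real.Gamma (((i / 2 : ℕ) : ℝ) + μ + 1 / 2) / Real.Gamma (μ + 1 / 2)
  else
    2 ^ i * (Nat.factorial (i / 2)) *
      Real.Gamma (((i / 2 : ℕ) : ℝ) + μ + 3 / 2) / Real.Gamma (μ + 1 / 2)

/-- θ_i = 0 if i is even, 1 if i is odd. -/
noncomputable def thetaFn (i : ℕ) : ℝ := if Even i then 0 else 1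

/-- The Dunkl exponential e_μ(x) = Σ x^i / γ_μ(i). -/
noncomputable def dunklExp (μ : ℝ) (x : ℝ) : ℝ := ∑' i : ℕ, x ^ i / gammaMu μ i

/-- The Dunkl operator (Λ_μ f)(x) = f'(x) + μ (f(x) - f(-x)) / x. -/
noncomputable def dunklOp (μ : ℝ) (f : ℝ → ℝ) (x : ℝ) : ℝ :=
  deriv f x + μ * (f x - f (-x)) / x

/-- Q(t) = Σ c_i t^i / γ_μ(i). -/
noncomputable def Qf (μ : ℝ) (c : ℕ → ℝ) (t : ℝ) : ℝ := ∑' i : ℕ, c i * t ^ i / gammaMu μ i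

/-- The Dunkl–Appell polynomials q_i(x) = Σ_{j=0}^i (γ_μ(i)/(γ_μ(j)γ_μ(i-j))) c_{i-j} x^j. -/
noncomputable def qPoly (μ : ℝ) (c : ℕ → ℝ) (i : ℕ) (x : ℝ) : ℝ :=
  ∑ j ∈ Finset.range (i + 1),
    gammaMu μ i / (gammaMu μ j * gammaMu μ (i - j)) * c (i - j) * x ^ j

/-- The operators K_n^μ(f;x). -/
noncomputable def Kop (μ : ℝ) (c : ℕ → ℝ) (n : ℕ) (f : ℝ → ℝ) (x : ℝ) : ℝ :=
  1 / (Qf μ c 1 * dunklExp μ (n * x)) *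
    ∑' i : ℕ, qPoly μ c i (n * x) / gammaMu μ i * f (((i : ℝ) + 2 * μ * thetaFn i) / n)
section Aux
variable {μ : ℝ}

/-- weight w_i = i + 2μθ_i -/
noncomputable def wMu (μ : ℝ) (i : ℕ) : ℝ := (i : ℝ) + 2 * μ * thetaFn i

lemma theta_zero : thetaFn 0 = 0 := by simp [thetaFn]
lemma theta_succ (i : ℕ) : thetaFn (i + 1) = 1 - thetaFn i := by
  rcases Nat.even_or_odd i with h | h
  · simp [thetaFn, h, Nat.even_add_one, Nat.not_even_iff_odd]
  · simp [thetaFn, h, Nat.even_add_one, Nat.not_even_iff_odd, Nat.not_even_iff_odd.mpr h]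

lemma theta_sq (i : ℕ) : thetaFn i * thetaFn i = thetaFn i := by
  unfold thetaFn; split <;> ring

lemma theta_nonneg (i : ℕ) : 0 ≤ thetaFn i := by unfold thetaFn; split <;> norm_num
lemma theta_le_one (i : ℕ) : thetaFn i ≤ 1 := by unfold thetaFn; split <;> norm_num

lemma theta_pow (i : ℕ) (y : ℝ) : (-y) ^ i = (1 - 2 * thetaFn i) * y ^ i := by
  rcases Nat.even_or_odd i with h | h
  · simp [thetaFn, h, h.neg_pow]
  · simp [thetaFn, Nat.not_even_iff_odd.mpr h, h.neg_pow]; ring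

lemma theta_add (j k : ℕ) :
    thetaFn (j + k) = thetaFn j + thetaFn k - 2 * thetaFn j * thetaFn k := by
  rcases Nat.even_or_odd j with hj | hj <;> rcases Nat.even_or_odd k with hk | hk
  · simp [thetaFn, hj, hk, hj.add hk]
  · have h : Odd (j + k) := hj.add_odd hk
    simp [thetaFn, hj, Nat.not_even_iff_odd.mpr hk, Nat.not_even_iff_odd.mpr h]
  · have h : Odd (j + k) := hj.add_even hk
    simp [thetaFn, hk, Nat.not_even_iff_odd.mpr hj, Nat.not_even_iff_odd.mpr h]
  · have h : Even (j + k) := hj.add_odd hk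
    simp [thetaFn, h, Nat.not_even_iff_odd.mpr hj, Nat.not_even_iff_odd.mpr hk]; ring

lemma wMu_zero : wMu μ 0 = 0 := by simp [wMu, theta_zero]
lemma wMu_nonneg (hμ : 0 ≤ μ) (i : ℕ) : 0 ≤ wMu μ i := by
  have := theta_nonneg i
  have : 0 ≤ 2 * μ * thetaFn i := by positivity
  unfold wMu; positivity
lemma wMu_ge (hμ : 0 ≤ μ) (i : ℕ) : (i : ℝ) ≤ wMu μ i := by
  have h1 := theta_nonneg i
  unfold wMu; nlinarith
lemma wMu_le (hμ : 0 ≤ μ) (i : ℕ) : wMu μ i ≤ (i : ℝ) + 2 * μ := by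
  have h1 := theta_le_one i
  unfold wMu; nlinarith
lemma wMu_succ (i : ℕ) : wMu μ (i + 1) = wMu μ i + 1 + 2 * μ * (1 - 2 * thetaFn i) := by
  unfold wMu; rw [theta_succ]; push_cast; ring

lemma gammaMu_pos (hμ : 0 ≤ μ) (i : ℕ) : 0 < gammaMu μ i := by
  have hg : (0:ℝ) < Real.Gamma (μ + 1/2) := Real.Gamma_pos_of_pos (by linarith)
  unfold gammaMu
  split
  · have : (0:ℝ) < Real.Gamma (((i / 2 : ℕ) : ℝ) + μ + 1/2) :=
      Real.Gamma_pos_of_pos (by positivity)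
    positivity
  · have : (0:ℝ) < Real.Gamma (((i / 2 : ℕ) : ℝ) + μ + 3/2) :=
      Real.Gamma_pos_of_pos (by positivity)
    positivity

lemma gammaMu_zero (hμ : 0 ≤ μ) : gammaMu μ 0 = 1 := by
  have hg : (0:ℝ) < Real.Gamma (μ + 1/2) := Real.Gamma_pos_of_pos (by linarith)
  rw [show μ + 1/2 = μ + 2⁻¹ by norm_num] at hg
  simp [gammaMu, div_self hg.ne']

lemma gammaMu_succ (hμ : 0 ≤ μ) (i : ℕ) :
    gammaMu μ (i + 1) = wMu μ (i + 1) * gammaMu μ i := by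
  have hg : (0:ℝ) < Real.Gamma (μ + 1/2) := Real.Gamma_pos_of_pos (by linarith)
  rcases Nat.even_or_odd i with h | h
  · obtain ⟨m, hm⟩ := h
    subst hm
    have hodd : ¬ Even (m + m + 1) := by
      simp only [Nat.even_add_one, not_not]
      exact ⟨m, rfl⟩
    have heven : Even (m + m) := ⟨m, rfl⟩
    have hd1 : (m + m + 1) / 2 = m := by omega
    have hd2 : (m + m) / 2 = m := by omega
    have hGam : Real.Gamma ((m:ℝ) + μ + 3/2) = ((m:ℝ) + μ + 1/2) * Real.Gamma ((m:ℝ) + μ + 1/2) := by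
      have : (m:ℝ) + μ + 3/2 = ((m:ℝ) + μ + 1/2) + 1 := by ring
      rw [this, Real.Gamma_add_one (by positivity)]
    rw [gammaMu, gammaMu, if_neg hodd, if_pos heven, hd1, hd2, wMu]
    have ht : thetaFn (m + m + 1) = 1 := by simp [thetaFn, hodd]
    rw [ht, hGam]
    push_cast
    field_simp
    ring
  · obtain ⟨m, hm⟩ := h
    subst hm
    have heven : Even (2*m + 1 + 1) := by refine ⟨m+1, by omega⟩
    have hodd : ¬ Even (2*m + 1) := by simp [Nat.not_even_iff_odd, Nat.odd_iff]
    have hd1 : (2*m + 1 + 1) / 2 = m + 1 := by omega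
    have hd2 : (2*m + 1) / 2 = m := by omega
    have hGamEq : ((m+1 : ℕ) : ℝ) + μ + 1/2 = (m:ℝ) + μ + 3/2 := by push_cast; ring
    have ht : thetaFn (2*m + 1 + 1) = 0 := by simp [thetaFn, heven]
    rw [gammaMu, gammaMu, if_pos heven, if_neg hodd, hd1, hd2, wMu, ht, hGamEq]
    have hfac : ((m+1).factorial : ℝ) = (m+1) * m.factorial := by
      rw [Nat.factorial_succ]; push_cast; ring
    rw [hfac]
    push_cast
    field_simp
    ring

end Aux
section Aux2
variable {μ : ℝ}

open Filter

/-- master summability on the b-side -/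
lemma summable_master (hμ : 0 ≤ μ) (y : ℝ) :
    Summable fun j : ℕ => ((j : ℝ) + 2*μ + 1)^2 * |y| ^ j / gammaMu μ j := by
  apply summable_of_ratio_norm_eventually_le (r := 1/2) (by norm_num)
  filter_upwards [eventually_ge_atTop (⌈8 * |y|⌉₊ + 1)] with j hj
  have hγ := gammaMu_pos hμ j
  have hγ' := gammaMu_pos hμ (j+1)
  have hw : wMu μ (j+1) ≥ (j:ℝ) + 1 := by
    have := wMu_ge hμ (j+1); push_cast at this ⊢; linarith
  have hwpos : (0:ℝ) < wMu μ (j+1) := lt_of_lt_of_le (by positivity) hw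
  have hjy : 8 * |y| ≤ (j:ℝ) := by
    have h1 : (⌈8 * |y|⌉₊ : ℝ) ≤ j := by exact_mod_cast Nat.le_of_succ_le hj
    calc 8 * |y| ≤ (⌈8 * |y|⌉₊ : ℝ) := Nat.le_ceil _
      _ ≤ j := h1
  have hterm : (0:ℝ) ≤ ((j : ℝ) + 2*μ + 1)^2 * |y| ^ j / gammaMu μ j := by positivity
  have hterm' : (0:ℝ) ≤ (((j+1) : ℝ) + 2*μ + 1)^2 * |y| ^ (j+1) / gammaMu μ (j+1) := by positivity
  rw [Real.norm_eq_abs, Real.norm_eq_abs, abs_of_nonneg (by push_cast; exact hterm'),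
    abs_of_nonneg hterm]
  rw [gammaMu_succ hμ j]
  have key : (((j:ℝ)+1) + 2*μ + 1)^2 * |y| ≤ 1/2 * ((j : ℝ) + 2*μ + 1)^2 * wMu μ (j+1) := by
    have h2 : ((j:ℝ)+1) + 2*μ + 1 ≤ 2 * ((j : ℝ) + 2*μ + 1) := by
      have : (0:ℝ) ≤ (j:ℝ) + 2*μ := by positivity
      linarith
    have h3 : (((j:ℝ)+1) + 2*μ + 1)^2 ≤ 4 * ((j : ℝ) + 2*μ + 1)^2 := by nlinarith [sq_nonneg ((j : ℝ) + 2*μ + 1)]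
    have h4 : 4 * ((j : ℝ) + 2*μ + 1)^2 * |y| ≤ 1/2 * ((j : ℝ) + 2*μ + 1)^2 * ((j:ℝ)+1) := by
      have hsq : (0:ℝ) ≤ ((j : ℝ) + 2*μ + 1)^2 := sq_nonneg _
      nlinarith [abs_nonneg y]
    calc (((j:ℝ)+1) + 2*μ + 1)^2 * |y| ≤ 4 * ((j : ℝ) + 2*μ + 1)^2 * |y| := by
          nlinarith [abs_nonneg y]
      _ ≤ 1/2 * ((j : ℝ) + 2*μ + 1)^2 * ((j:ℝ)+1) := h4
      _ ≤ 1/2 * ((j : ℝ) + 2*μ + 1)^2 * wMu μ (j+1) := by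
          have hsq : (0:ℝ) ≤ ((j : ℝ) + 2*μ + 1)^2 := sq_nonneg _
          nlinarith
  have expand : (((j+1) : ℕ) : ℝ) = (j:ℝ) + 1 := by push_cast; ring
  rw [pow_succ, div_le_iff₀ (by positivity), expand]
  have hrhs : (1/2 * (((j:ℝ) + 2*μ+1)^2 * |y|^j / gammaMu μ j)) * (wMu μ (j+1) * gammaMu μ j)
      = (1/2 * ((j : ℝ) + 2*μ + 1)^2 * wMu μ (j+1)) * |y|^j := by field_simp
  rw [hrhs]
  have hyj : (0:ℝ) ≤ |y|^j := by positivity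
  calc (((j:ℝ)+1) + 2*μ+1)^2 * (|y|^j * |y|)
      = ((((j:ℝ)+1) + 2*μ+1)^2 * |y|) * |y|^j := by ring
    _ ≤ (1/2 * ((j : ℝ) + 2*μ + 1)^2 * wMu μ (j+1)) * |y|^j :=
        mul_le_mul_of_nonneg_right key hyj
end Aux2
section Aux3
variable {μ : ℝ}
open Filter

lemma abs_term (hμ : 0 ≤ μ) (y : ℝ) (j : ℕ) : |y ^ j / gammaMu μ j| = |y|^j / gammaMu μ j := by
  rw [abs_div, abs_pow, abs_of_pos (gammaMu_pos hμ j)]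

lemma one_le_base (hμ : 0 ≤ μ) (j : ℕ) : (1:ℝ) ≤ ((j:ℝ) + 2*μ + 1) := by
  have : (0:ℝ) ≤ (j:ℝ) := Nat.cast_nonneg j
  linarith

lemma wMu_le_base (hμ : 0 ≤ μ) (j : ℕ) : wMu μ j ≤ (j:ℝ) + 2*μ + 1 := by
  have := wMu_le hμ j; linarith

lemma summable_abs_u0 (hμ : 0 ≤ μ) (y : ℝ) : Summable fun j : ℕ => |y ^ j / gammaMu μ j| := by
  refine (summable_master hμ y).of_nonneg_of_le (fun j => abs_nonneg _) (fun j => ?_)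
  rw [abs_term hμ]
  have h1 := one_le_base hμ j
  have h2 : (1:ℝ) ≤ ((j:ℝ) + 2*μ + 1)^2 := by nlinarith
  have hp : (0:ℝ) ≤ |y|^j / gammaMu μ j :=
    div_nonneg (pow_nonneg (abs_nonneg y) j) (gammaMu_pos hμ j).le
  calc |y|^j / gammaMu μ j = 1 * (|y|^j / gammaMu μ j) := by ring
    _ ≤ ((j:ℝ) + 2*μ + 1)^2 * (|y|^j / gammaMu μ j) := by
        exact mul_le_mul_of_nonneg_right h2 hp
    _ = ((j:ℝ) + 2*μ + 1)^2 * |y|^j / gammaMu μ j := by ring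

lemma summable_abs_u1 (hμ : 0 ≤ μ) (y : ℝ) :
    Summable fun j : ℕ => |wMu μ j * (y ^ j / gammaMu μ j)| := by
  refine (summable_master hμ y).of_nonneg_of_le (fun j => abs_nonneg _) (fun j => ?_)
  rw [abs_mul, abs_term hμ, abs_of_nonneg (wMu_nonneg hμ j)]
  have h1 := one_le_base hμ j
  have h2 : wMu μ j ≤ ((j:ℝ) + 2*μ + 1)^2 := by
    calc wMu μ j ≤ (j:ℝ) + 2*μ + 1 := wMu_le_base hμ j
      _ ≤ ((j:ℝ) + 2*μ + 1)^2 := by nlinarith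
  have hp : (0:ℝ) ≤ |y|^j / gammaMu μ j :=
    div_nonneg (pow_nonneg (abs_nonneg y) j) (gammaMu_pos hμ j).le
  calc wMu μ j * (|y|^j / gammaMu μ j) ≤ ((j:ℝ) + 2*μ + 1)^2 * (|y|^j / gammaMu μ j) :=
        mul_le_mul_of_nonneg_right h2 hp
    _ = ((j:ℝ) + 2*μ + 1)^2 * |y|^j / gammaMu μ j := by ring

lemma summable_abs_u2 (hμ : 0 ≤ μ) (y : ℝ) :
    Summable fun j : ℕ => |wMu μ j ^ 2 * (y ^ j / gammaMu μ j)| := by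
  refine (summable_master hμ y).of_nonneg_of_le (fun j => abs_nonneg _) (fun j => ?_)
  rw [abs_mul, abs_term hμ, abs_of_nonneg (by positivity : (0:ℝ) ≤ wMu μ j ^ 2)]
  have h2 : wMu μ j ^ 2 ≤ ((j:ℝ) + 2*μ + 1)^2 := by
    have := wMu_le_base hμ j
    have := wMu_nonneg hμ j
    nlinarith
  have hp : (0:ℝ) ≤ |y|^j / gammaMu μ j :=
    div_nonneg (pow_nonneg (abs_nonneg y) j) (gammaMu_pos hμ j).le
  calc wMu μ j ^2 * (|y|^j / gammaMu μ j) ≤ ((j:ℝ) + 2*μ + 1)^2 * (|y|^j / gammaMu μ j) :=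
        mul_le_mul_of_nonneg_right h2 hp
    _ = ((j:ℝ) + 2*μ + 1)^2 * |y|^j / gammaMu μ j := by ring

lemma summable_abs_utheta (hμ : 0 ≤ μ) (y : ℝ) :
    Summable fun j : ℕ => |thetaFn j * (y ^ j / gammaMu μ j)| := by
  refine (summable_abs_u0 hμ y).of_nonneg_of_le (fun j => abs_nonneg _) (fun j => ?_)
  rw [abs_mul, abs_of_nonneg (theta_nonneg j)]
  have := theta_le_one j
  have := abs_nonneg (y ^ j / gammaMu μ j)
  nlinarith

lemma summable_abs_uthetaw (hμ : 0 ≤ μ) (y : ℝ) :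
    Summable fun j : ℕ => |thetaFn j * wMu μ j * (y ^ j / gammaMu μ j)| := by
  refine (summable_abs_u1 hμ y).of_nonneg_of_le (fun j => abs_nonneg _) (fun j => ?_)
  rw [show thetaFn j * wMu μ j * (y ^ j / gammaMu μ j)
      = thetaFn j * (wMu μ j * (y ^ j / gammaMu μ j)) by ring, abs_mul,
    abs_of_nonneg (theta_nonneg j)]
  have := theta_le_one j
  have := abs_nonneg (wMu μ j * (y ^ j / gammaMu μ j))
  nlinarith

/-- master summability on the c-side -/
lemma summable_masterC (hμ : 0 ≤ μ) {c : ℕ → ℝ}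
    (hQ : ∀ t : ℝ, Summable fun i : ℕ => |c i * t ^ i / gammaMu μ i|) :
    Summable fun k : ℕ => ((k:ℝ) + 2*μ + 1)^2 * |c k| / gammaMu μ k := by
  refine Summable.of_norm_bounded_eventually_nat (g := fun k => |c k * 2 ^ k / gammaMu μ k|)
    (hQ 2) ?_
  have hT : Tendsto (fun k : ℕ => (k:ℝ)^2 / 2^k) atTop (nhds 0) :=
    tendsto_pow_const_div_const_pow_of_one_lt 2 one_lt_two
  have hpos' : (0:ℝ) < 4*(2*μ+2)^2 := by positivity
  have hpos : (0:ℝ) < 1/(4*(2*μ+2)^2) := by positivity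
  have hev : ∀ᶠ k : ℕ in atTop, (k:ℝ)^2/2^k < 1/(4*(2*μ+2)^2) :=
    hT.eventually_lt_const hpos
  filter_upwards [hev, eventually_ge_atTop 1] with k hk hk1
  have hγ := gammaMu_pos hμ k
  have hk1' : (1:ℝ) ≤ (k:ℝ) := by exact_mod_cast hk1
  have h2k : (0:ℝ) < 2^k := by positivity
  have hbig : ((k:ℝ) + 2*μ + 1)^2 ≤ 2^k := by
    have e1 : (k:ℝ) + 2*μ + 1 ≤ (2*μ+2) * ((k:ℝ)+1) := by nlinarith
    have e2 : ((k:ℝ)+1) ≤ 2*(k:ℝ) := by linarith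
    have e3 : ((k:ℝ) + 2*μ + 1)^2 ≤ (2*μ+2)^2 * (2*(k:ℝ))^2 := by
      have h0 : (0:ℝ) ≤ (k:ℝ) + 2*μ + 1 := by positivity
      have h0' : (k:ℝ) + 2*μ + 1 ≤ (2*μ+2) * (2*(k:ℝ)) := by nlinarith
      nlinarith
    rw [div_lt_div_iff₀ h2k hpos'] at hk
    nlinarith [hk, e3]
  rw [Real.norm_eq_abs, abs_of_nonneg (by positivity : (0:ℝ) ≤ ((k:ℝ) + 2*μ + 1)^2 * |c k| / gammaMu μ k)]
  have : |c k * 2 ^ k / gammaMu μ k| = 2^k * |c k| / gammaMu μ k := by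
    rw [abs_div, abs_mul, abs_of_pos hγ, abs_of_pos h2k]; ring
  rw [this]
  gcongr

end Aux3
section Aux4
variable {μ : ℝ}

lemma summable_u0 (hμ : 0 ≤ μ) (y : ℝ) : Summable fun j : ℕ => y ^ j / gammaMu μ j :=
  (summable_abs_u0 hμ y).of_abs
lemma summable_u1 (hμ : 0 ≤ μ) (y : ℝ) : Summable fun j : ℕ => wMu μ j * (y ^ j / gammaMu μ j) :=
  (summable_abs_u1 hμ y).of_abs
lemma summable_u2 (hμ : 0 ≤ μ) (y : ℝ) : Summable fun j : ℕ => wMu μ j ^ 2 * (y ^ j / gammaMu μ j) :=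
  (summable_abs_u2 hμ y).of_abs
lemma summable_utheta (hμ : 0 ≤ μ) (y : ℝ) : Summable fun j : ℕ => thetaFn j * (y ^ j / gammaMu μ j) :=
  (summable_abs_utheta hμ y).of_abs
lemma summable_uthetaw (hμ : 0 ≤ μ) (y : ℝ) :
    Summable fun j : ℕ => thetaFn j * wMu μ j * (y ^ j / gammaMu μ j) :=
  (summable_abs_uthetaw hμ y).of_abs

lemma wMu_succ_pos (hμ : 0 ≤ μ) (j : ℕ) : 0 < wMu μ (j+1) := by
  have := wMu_ge hμ (j+1)
  have : ((j+1 : ℕ) : ℝ) ≤ wMu μ (j+1) := this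
  push_cast at this
  linarith

lemma shift_term (hμ : 0 ≤ μ) (y : ℝ) (j : ℕ) :
    wMu μ (j+1) * (y ^ (j+1) / gammaMu μ (j+1)) = y * (y ^ j / gammaMu μ j) := by
  rw [gammaMu_succ hμ j, pow_succ]
  have h1 := (wMu_succ_pos hμ j).ne'
  have h2 := (gammaMu_pos hμ j).ne'
  field_simp

lemma sum_u1 (hμ : 0 ≤ μ) (y : ℝ) :
    ∑' j : ℕ, wMu μ j * (y ^ j / gammaMu μ j) = y * dunklExp μ y := by
  rw [Summable.tsum_eq_zero_add (summable_u1 hμ y)]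
  simp only [wMu_zero, zero_mul, zero_add]
  calc ∑' j : ℕ, wMu μ (j+1) * (y ^ (j+1) / gammaMu μ (j+1))
      = ∑' j : ℕ, y * (y ^ j / gammaMu μ j) := tsum_congr (shift_term hμ y)
    _ = y * dunklExp μ y := by rw [tsum_mul_left]; rfl

lemma sum_utheta (hμ : 0 ≤ μ) (y : ℝ) :
    ∑' j : ℕ, thetaFn j * (y ^ j / gammaMu μ j)
      = (dunklExp μ y - dunklExp μ (-y)) / 2 := by
  have hpt : ∀ j : ℕ, thetaFn j * (y ^ j / gammaMu μ j)
      = (1/2) * (y ^ j / gammaMu μ j - (-y) ^ j / gammaMu μ j) := by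
    intro j
    rw [theta_pow j y]
    have := (gammaMu_pos hμ j).ne'
    field_simp
    ring
  rw [tsum_congr hpt, tsum_mul_left,
    Summable.tsum_sub (summable_u0 hμ y) (summable_u0 hμ (-y))]
  unfold dunklExp
  ring

lemma sum_uthetaw (hμ : 0 ≤ μ) (y : ℝ) :
    ∑' j : ℕ, thetaFn j * wMu μ j * (y ^ j / gammaMu μ j)
      = (y * dunklExp μ y + y * dunklExp μ (-y)) / 2 := by
  have hpt : ∀ j : ℕ, thetaFn j * wMu μ j * (y ^ j / gammaMu μ j)
      = (1/2) * (wMu μ j * (y ^ j / gammaMu μ j) - wMu μ j * ((-y) ^ j / gammaMu μ j)) := by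
    intro j
    rw [theta_pow j y]
    have := (gammaMu_pos hμ j).ne'
    field_simp
    ring
  rw [tsum_congr hpt, tsum_mul_left,
    Summable.tsum_sub (summable_u1 hμ y) (summable_u1 hμ (-y)),
    sum_u1 hμ y, sum_u1 hμ (-y)]
  ring

lemma sum_u2 (hμ : 0 ≤ μ) (y : ℝ) :
    ∑' j : ℕ, wMu μ j ^ 2 * (y ^ j / gammaMu μ j)
      = y^2 * dunklExp μ y + y * dunklExp μ y + 2 * μ * y * dunklExp μ (-y) := by
  rw [Summable.tsum_eq_zero_add (summable_u2 hμ y)]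
  simp only [wMu_zero, zero_pow, ne_eq, OfNat.ofNat_ne_zero, not_false_eq_true, zero_mul, zero_add]
  have hpt : ∀ j : ℕ, wMu μ (j+1) ^ 2 * (y ^ (j+1) / gammaMu μ (j+1))
      = y * (wMu μ j * (y ^ j / gammaMu μ j)) + y * (y ^ j / gammaMu μ j)
        + (2*μ*y) * ((-y) ^ j / gammaMu μ j) := by
    intro j
    have h1 : wMu μ (j+1) ^ 2 * (y ^ (j+1) / gammaMu μ (j+1))
        = wMu μ (j+1) * (wMu μ (j+1) * (y ^ (j+1) / gammaMu μ (j+1))) := by ring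
    rw [h1, shift_term hμ y j, wMu_succ, theta_pow j y]
    ring
  rw [tsum_congr hpt]
  rw [Summable.tsum_add (((summable_u1 hμ y).mul_left y).add ((summable_u0 hμ y).mul_left y))
    ((summable_u0 hμ (-y)).mul_left (2*μ*y)),
    Summable.tsum_add ((summable_u1 hμ y).mul_left y) ((summable_u0 hμ y).mul_left y),
    tsum_mul_left, tsum_mul_left, tsum_mul_left, sum_u1 hμ y]
  unfold dunklExp
  ring

end Aux4
section Aux5
variable {μ : ℝ} {c : ℕ → ℝ}

/-- Q'(1) as a series -/
noncomputable def Dc (μ : ℝ) (c : ℕ → ℝ) : ℝ := ∑' k : ℕ, (k:ℝ) * c k / gammaMu μ k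
/-- −Q'(−1) as a series -/
noncomputable def Dm (μ : ℝ) (c : ℕ → ℝ) : ℝ := ∑' k : ℕ, (k:ℝ) * c k * (-1)^k / gammaMu μ k
/-- Q''(1) as a series -/
noncomputable def Dc2 (μ : ℝ) (c : ℕ → ℝ) : ℝ := ∑' k : ℕ, (k:ℝ) * ((k:ℝ) - 1) * c k / gammaMu μ k

lemma summable_abs_weightC (hμ : 0 ≤ μ)
    (hQ : ∀ t : ℝ, Summable fun i : ℕ => |c i * t ^ i / gammaMu μ i|)
    {v : ℕ → ℝ} (hv : ∀ k, |v k| ≤ ((k:ℝ) + 2*μ + 1)^2) :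
    Summable fun k : ℕ => |v k * (c k / gammaMu μ k)| := by
  refine (summable_masterC hμ hQ).of_nonneg_of_le (fun k => abs_nonneg _) (fun k => ?_)
  have hγ := gammaMu_pos hμ k
  rw [abs_mul, abs_div, abs_of_pos hγ]
  have h1 : (0:ℝ) ≤ |c k| / gammaMu μ k := div_nonneg (abs_nonneg _) hγ.le
  calc |v k| * (|c k| / gammaMu μ k) ≤ ((k:ℝ) + 2*μ + 1)^2 * (|c k| / gammaMu μ k) :=
        mul_le_mul_of_nonneg_right (hv k) h1
    _ = ((k:ℝ) + 2*μ + 1)^2 * |c k| / gammaMu μ k := by ring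

lemma summable_weightC (hμ : 0 ≤ μ)
    (hQ : ∀ t : ℝ, Summable fun i : ℕ => |c i * t ^ i / gammaMu μ i|)
    {v : ℕ → ℝ} (hv : ∀ k, |v k| ≤ ((k:ℝ) + 2*μ + 1)^2) :
    Summable fun k : ℕ => v k * (c k / gammaMu μ k) :=
  (summable_abs_weightC hμ hQ hv).of_abs

lemma base_bound (hμ : 0 ≤ μ) (k : ℕ) : (k:ℝ) ≤ ((k:ℝ) + 2*μ + 1)^2 := by
  have h0 : (0:ℝ) ≤ (k:ℝ) := Nat.cast_nonneg k
  nlinarith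

lemma bound_one (hμ : 0 ≤ μ) (k : ℕ) : (1:ℝ) ≤ ((k:ℝ) + 2*μ + 1)^2 := by
  have h0 : (0:ℝ) ≤ (k:ℝ) := Nat.cast_nonneg k
  nlinarith

lemma sv_w (hμ : 0 ≤ μ) : ∀ k : ℕ, |wMu μ k| ≤ ((k:ℝ) + 2*μ + 1)^2 := fun k => by
  rw [abs_of_nonneg (wMu_nonneg hμ k)]
  have := wMu_le_base hμ k
  have h0 : (0:ℝ) ≤ (k:ℝ) := Nat.cast_nonneg k
  nlinarith
lemma sv_w2 (hμ : 0 ≤ μ) : ∀ k : ℕ, |wMu μ k ^ 2| ≤ ((k:ℝ) + 2*μ + 1)^2 := fun k => by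
  rw [abs_of_nonneg (sq_nonneg _)]
  have h1 := wMu_le_base hμ k
  have h2 := wMu_nonneg hμ k
  nlinarith
lemma sv_th (hμ : 0 ≤ μ) : ∀ k : ℕ, |thetaFn k| ≤ ((k:ℝ) + 2*μ + 1)^2 := fun k => by
  rw [abs_of_nonneg (theta_nonneg k)]
  have := theta_le_one k
  have := bound_one hμ k
  linarith
lemma sv_thw (hμ : 0 ≤ μ) : ∀ k : ℕ, |thetaFn k * wMu μ k| ≤ ((k:ℝ) + 2*μ + 1)^2 := fun k => by
  rw [abs_mul, abs_of_nonneg (theta_nonneg k), abs_of_nonneg (wMu_nonneg hμ k)]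
  have h1 := theta_le_one k
  have h2 := theta_nonneg k
  have h3 := wMu_nonneg hμ k
  have h4 := sv_w hμ k
  rw [abs_of_nonneg h3] at h4
  nlinarith
lemma sv_k (hμ : 0 ≤ μ) : ∀ k : ℕ, |(k:ℝ)| ≤ ((k:ℝ) + 2*μ + 1)^2 := fun k => by
  rw [abs_of_nonneg (Nat.cast_nonneg k)]; exact base_bound hμ k
lemma sv_ksgn (hμ : 0 ≤ μ) : ∀ k : ℕ, |(k:ℝ) * (-1:ℝ)^k| ≤ ((k:ℝ) + 2*μ + 1)^2 := fun k => by
  rw [abs_mul, abs_pow, abs_neg, abs_one, one_pow, mul_one, abs_of_nonneg (Nat.cast_nonneg k)]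
  exact base_bound hμ k
lemma sv_kk (hμ : 0 ≤ μ) : ∀ k : ℕ, |(k:ℝ) * ((k:ℝ)-1)| ≤ ((k:ℝ) + 2*μ + 1)^2 := fun k => by
  have h0 : (0:ℝ) ≤ (k:ℝ) := Nat.cast_nonneg k
  rcases le_or_gt 1 (k:ℝ) with h | h
  · rw [abs_of_nonneg (by nlinarith)]; nlinarith
  · have : (k:ℝ) = 0 := by
      have : k = 0 := by exact_mod_cast Nat.lt_one_iff.mp (by exact_mod_cast h)
      simp [this]
    rw [this]; simp [abs_of_nonneg]; positivity

lemma theta_sign (k : ℕ) : (-1:ℝ)^k = 1 - 2*thetaFn k := by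
  have h := theta_pow k 1
  simp only [one_pow, mul_one] at h
  rw [show (-(1:ℝ))^k = (-1:ℝ)^k by norm_num] at h
  exact h

lemma sum_v0 (hμ : 0 ≤ μ) : ∑' k : ℕ, c k / gammaMu μ k = Qf μ c 1 := by
  unfold Qf; exact tsum_congr fun k => by rw [one_pow, mul_one]

lemma sum_vtheta (hμ : 0 ≤ μ)
    (hQ : ∀ t : ℝ, Summable fun i : ℕ => |c i * t ^ i / gammaMu μ i|) :
    ∑' k : ℕ, thetaFn k * (c k / gammaMu μ k) = (Qf μ c 1 - Qf μ c (-1)) / 2 := by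
  have hpt : ∀ k : ℕ, thetaFn k * (c k / gammaMu μ k)
      = (1/2) * (c k * 1^k / gammaMu μ k - c k * (-1)^k / gammaMu μ k) := by
    intro k
    rw [one_pow, theta_sign k]
    ring
  rw [tsum_congr hpt, tsum_mul_left, Summable.tsum_sub ((hQ 1).of_abs) ((hQ (-1)).of_abs)]
  unfold Qf
  ring

lemma sum_kth (hμ : 0 ≤ μ)
    (hQ : ∀ t : ℝ, Summable fun i : ℕ => |c i * t ^ i / gammaMu μ i|) :
    ∑' k : ℕ, (k:ℝ) * thetaFn k * (c k / gammaMu μ k) = (Dc μ c - Dm μ c) / 2 := by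
  have hpt : ∀ k : ℕ, (k:ℝ) * thetaFn k * (c k / gammaMu μ k)
      = (1/2) * ((k:ℝ) * (c k / gammaMu μ k) - ((k:ℝ) * (-1:ℝ)^k) * (c k / gammaMu μ k)) := by
    intro k
    rw [theta_sign k]
    ring
  rw [tsum_congr hpt, tsum_mul_left,
    Summable.tsum_sub (summable_weightC hμ hQ (sv_k hμ)) (summable_weightC hμ hQ (sv_ksgn hμ))]
  unfold Dc Dm
  have e1 : ∑' k : ℕ, (k:ℝ) * (c k / gammaMu μ k) = ∑' k : ℕ, (k:ℝ) * c k / gammaMu μ k :=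
    tsum_congr fun k => by ring
  have e2 : ∑' k : ℕ, ((k:ℝ) * (-1:ℝ)^k) * (c k / gammaMu μ k)
      = ∑' k : ℕ, (k:ℝ) * c k * (-1:ℝ)^k / gammaMu μ k :=
    tsum_congr fun k => by ring
  rw [e1, e2]
  ring

lemma sum_v1 (hμ : 0 ≤ μ)
    (hQ : ∀ t : ℝ, Summable fun i : ℕ => |c i * t ^ i / gammaMu μ i|) :
    ∑' k : ℕ, wMu μ k * (c k / gammaMu μ k)
      = Dc μ c + μ * (Qf μ c 1 - Qf μ c (-1)) := by
  have hpt : ∀ k : ℕ, wMu μ k * (c k / gammaMu μ k)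
      = (k:ℝ) * (c k / gammaMu μ k) + (2*μ) * (thetaFn k * (c k / gammaMu μ k)) := by
    intro k; unfold wMu; ring
  rw [tsum_congr hpt,
    Summable.tsum_add (summable_weightC hμ hQ (sv_k hμ))
      (((summable_weightC hμ hQ (sv_th hμ))).mul_left (2*μ)),
    tsum_mul_left, sum_vtheta hμ hQ]
  unfold Dc
  have e1 : ∑' k : ℕ, (k:ℝ) * (c k / gammaMu μ k) = ∑' k : ℕ, (k:ℝ) * c k / gammaMu μ k :=
    tsum_congr fun k => by ring
  rw [e1]
  ring

lemma sum_vthetaw (hμ : 0 ≤ μ)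
    (hQ : ∀ t : ℝ, Summable fun i : ℕ => |c i * t ^ i / gammaMu μ i|) :
    ∑' k : ℕ, thetaFn k * wMu μ k * (c k / gammaMu μ k)
      = (Dc μ c - Dm μ c) / 2 + μ * (Qf μ c 1 - Qf μ c (-1)) := by
  have hpt : ∀ k : ℕ, thetaFn k * wMu μ k * (c k / gammaMu μ k)
      = (k:ℝ) * thetaFn k * (c k / gammaMu μ k) + (2*μ) * (thetaFn k * (c k / gammaMu μ k)) := by
    intro k; unfold wMu
    linear_combination (2*μ*(c k / gammaMu μ k)) * theta_sq k
  rw [tsum_congr hpt,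
    Summable.tsum_add (summable_weightC hμ hQ (fun k => ?_))
      (((summable_weightC hμ hQ (sv_th hμ))).mul_left (2*μ)),
    tsum_mul_left, sum_vtheta hμ hQ, sum_kth hμ hQ]
  · ring
  · -- |k * θ k| ≤ base²
    rw [abs_mul, abs_of_nonneg (Nat.cast_nonneg (α := ℝ) k), abs_of_nonneg (theta_nonneg k)]
    have h1 := theta_le_one k
    have h2 := theta_nonneg k
    have h3 := base_bound hμ k
    have h0 : (0:ℝ) ≤ (k:ℝ) := Nat.cast_nonneg k
    nlinarith

lemma sum_v2 (hμ : 0 ≤ μ)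
    (hQ : ∀ t : ℝ, Summable fun i : ℕ => |c i * t ^ i / gammaMu μ i|) :
    ∑' k : ℕ, wMu μ k ^ 2 * (c k / gammaMu μ k)
      = Dc2 μ c + Dc μ c + 2*μ*(Dc μ c - Dm μ c) + 2*μ^2*(Qf μ c 1 - Qf μ c (-1)) := by
  have hpt : ∀ k : ℕ, wMu μ k ^ 2 * (c k / gammaMu μ k)
      = ((k:ℝ) * ((k:ℝ)-1)) * (c k / gammaMu μ k) + (k:ℝ) * (c k / gammaMu μ k)
        + (4*μ) * ((k:ℝ) * thetaFn k * (c k / gammaMu μ k))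
        + (4*μ^2) * (thetaFn k * (c k / gammaMu μ k)) := by
    intro k; unfold wMu
    linear_combination (4*μ^2*(c k / gammaMu μ k)) * theta_sq k
  rw [tsum_congr hpt]
  have s1 := summable_weightC hμ hQ (sv_kk hμ)
  have s2 := summable_weightC hμ hQ (sv_k hμ)
  have skth : Summable fun k : ℕ => (k:ℝ) * thetaFn k * (c k / gammaMu μ k) := by
    refine summable_weightC hμ hQ (fun k => ?_)
    rw [abs_mul, abs_of_nonneg (Nat.cast_nonneg (α := ℝ) k), abs_of_nonneg (theta_nonneg k)]
    have h1 := theta_le_one k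
    have h2 := theta_nonneg k
    have h3 := base_bound hμ k
    have h0 : (0:ℝ) ≤ (k:ℝ) := Nat.cast_nonneg k
    nlinarith
  have s3 := skth.mul_left (4*μ)
  have s4 := (summable_weightC hμ hQ (sv_th hμ)).mul_left (4*μ^2)
  rw [Summable.tsum_add ((s1.add s2).add s3) s4, Summable.tsum_add (s1.add s2) s3, Summable.tsum_add s1 s2,
    tsum_mul_left, tsum_mul_left, sum_kth hμ hQ, sum_vtheta hμ hQ]
  unfold Dc2 Dc
  have e1 : ∑' k : ℕ, ((k:ℝ) * ((k:ℝ)-1)) * (c k / gammaMu μ k)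
      = ∑' k : ℕ, (k:ℝ) * ((k:ℝ)-1) * c k / gammaMu μ k := tsum_congr fun k => by ring
  have e2 : ∑' k : ℕ, (k:ℝ) * (c k / gammaMu μ k) = ∑' k : ℕ, (k:ℝ) * c k / gammaMu μ k :=
    tsum_congr fun k => by ring
  rw [e1, e2]
  ring

end Aux5
section Aux6
variable {μ : ℝ} {c : ℕ → ℝ}
open Filter

lemma hasDerivAt_Qf (hμ : 0 ≤ μ)
    (hQ : ∀ t : ℝ, Summable fun i : ℕ => |c i * t ^ i / gammaMu μ i|) (t₀ : ℝ) :
    HasDerivAt (Qf μ c)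
      (∑' k : ℕ, c k * ((k:ℝ) * t₀ ^ (k-1)) / gammaMu μ k) t₀ := by
  set R : ℝ := |t₀| + 1 with hR
  have hR1 : (1:ℝ) ≤ R := by rw [hR]; linarith [abs_nonneg t₀]
  have hRpos : (0:ℝ) < R := by linarith
  have ht₀ : t₀ ∈ Metric.ball (0:ℝ) R := by
    simp only [Metric.mem_ball, Real.dist_eq, sub_zero, hR]
    linarith [abs_nonneg t₀]
  have key := hasDerivAt_tsum_of_isPreconnected
    (u := fun k : ℕ => |c k * (2*R) ^ k / gammaMu μ k|)
    (𝕜 := ℝ) (F := ℝ)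
    (g := fun k t => c k * t ^ k / gammaMu μ k)
    (g' := fun k t => c k * ((k:ℝ) * t ^ (k-1)) / gammaMu μ k)
    (t := Metric.ball (0:ℝ) R) (y₀ := t₀) (y := t₀)
    (hQ (2*R)) Metric.isOpen_ball (convex_ball (0:ℝ) R).isPreconnected
    ?_ ?_ ht₀ ((hQ t₀).of_abs) ht₀
  · exact key
  · intro k t ht
    have h0 := (hasDerivAt_pow k t).const_mul (c k / gammaMu μ k)
    have e1 : (fun y : ℝ => c k / gammaMu μ k * y ^ k) = fun y : ℝ => c k * y ^ k / gammaMu μ k := by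
      funext y; ring
    have e2 : c k / gammaMu μ k * ((k:ℝ) * t^(k-1)) = c k * ((k:ℝ)*t^(k-1)) / gammaMu μ k := by
      ring
    rw [e1, e2] at h0
    exact h0
  · intro k t ht
    simp only [Metric.mem_ball, Real.dist_eq, sub_zero] at ht
    have hγ := gammaMu_pos hμ k
    have h2R : (0:ℝ) < 2*R := by linarith
    rw [Real.norm_eq_abs, abs_div, abs_mul, abs_of_pos hγ, abs_mul,
      abs_of_nonneg (Nat.cast_nonneg (α := ℝ) k), abs_pow]
    have habs : |c k * (2*R)^k / gammaMu μ k| = |c k| * (2*R)^k / gammaMu μ k := by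
      rw [abs_div, abs_mul, abs_of_pos hγ, abs_of_pos (by positivity : (0:ℝ) < (2*R)^k)]
    show |c k| * ((k:ℝ) * |t| ^ (k-1)) / gammaMu μ k ≤ |c k * (2*R)^k / gammaMu μ k|
    rw [habs]
    have hb : (k:ℝ) * |t| ^ (k-1) ≤ (2*R)^k := by
      have h1 : |t| ^ (k-1) ≤ R ^ (k-1) := pow_le_pow_left₀ (abs_nonneg t) ht.le _
      have h2 : R ^ (k-1) ≤ R ^ k := pow_le_pow_right₀ hR1 (Nat.sub_le k 1)
      have h3 : (k:ℝ) ≤ 2^k := by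
        exact_mod_cast (Nat.lt_two_pow_self (n := k)).le
      calc (k:ℝ) * |t| ^ (k-1) ≤ (k:ℝ) * R ^ (k-1) := by
            apply mul_le_mul_of_nonneg_left h1 (Nat.cast_nonneg k)
        _ ≤ 2^k * R ^ k := by
            apply mul_le_mul h3 h2 (by positivity) (by positivity)
        _ = (2*R)^k := by rw [mul_pow]
    have hm : |c k| * ((k:ℝ) * |t| ^ (k-1)) ≤ |c k| * (2*R)^k :=
      mul_le_mul_of_nonneg_left hb (abs_nonneg (c k))
    rw [div_le_div_iff₀ hγ hγ]
    exact mul_le_mul_of_nonneg_right hm hγ.le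

lemma hasDerivAt_Qf' (hμ : 0 ≤ μ)
    (hQ : ∀ t : ℝ, Summable fun i : ℕ => |c i * t ^ i / gammaMu μ i|) (t₀ : ℝ) :
    HasDerivAt (fun t : ℝ => ∑' k : ℕ, c k * ((k:ℝ) * t ^ (k-1)) / gammaMu μ k)
      (∑' k : ℕ, c k * ((k:ℝ) * (((k-1:ℕ):ℝ) * t₀ ^ (k-1-1))) / gammaMu μ k) t₀ := by
  set R : ℝ := |t₀| + 1 with hR
  have hR1 : (1:ℝ) ≤ R := by rw [hR]; linarith [abs_nonneg t₀]
  have hRpos : (0:ℝ) < R := by linarith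
  have ht₀ : t₀ ∈ Metric.ball (0:ℝ) R := by
    simp only [Metric.mem_ball, Real.dist_eq, sub_zero, hR]
    linarith [abs_nonneg t₀]
  have hsum0 : Summable fun k : ℕ => c k * ((k:ℝ) * t₀ ^ (k-1)) / gammaMu μ k := by
    refine Summable.of_norm_bounded (g := fun k => |c k * (2*R) ^ k / gammaMu μ k|) (hQ (2*R))
      (fun k => ?_)
    have hγ := gammaMu_pos hμ k
    rw [Real.norm_eq_abs, abs_div, abs_mul, abs_of_pos hγ, abs_mul,
      abs_of_nonneg (Nat.cast_nonneg (α := ℝ) k), abs_pow]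
    have habs : |c k * (2*R)^k / gammaMu μ k| = |c k| * (2*R)^k / gammaMu μ k := by
      rw [abs_div, abs_mul, abs_of_pos hγ, abs_of_pos (by positivity : (0:ℝ) < (2*R)^k)]
    show |c k| * ((k:ℝ) * |t₀| ^ (k-1)) / gammaMu μ k ≤ |c k * (2*R)^k / gammaMu μ k|
    rw [habs]
    have hb : (k:ℝ) * |t₀| ^ (k-1) ≤ (2*R)^k := by
      have h1 : |t₀| ^ (k-1) ≤ R ^ (k-1) := pow_le_pow_left₀ (abs_nonneg t₀) (by linarith) _
      have h2 : R ^ (k-1) ≤ R ^ k := pow_le_pow_right₀ hR1 (Nat.sub_le k 1)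
      have h3 : (k:ℝ) ≤ 2^k := by exact_mod_cast (Nat.lt_two_pow_self (n := k)).le
      calc (k:ℝ) * |t₀| ^ (k-1) ≤ (k:ℝ) * R ^ (k-1) :=
            mul_le_mul_of_nonneg_left h1 (Nat.cast_nonneg k)
        _ ≤ 2^k * R ^ k := mul_le_mul h3 h2 (by positivity) (by positivity)
        _ = (2*R)^k := by rw [mul_pow]
    have hm : |c k| * ((k:ℝ) * |t₀| ^ (k-1)) ≤ |c k| * (2*R)^k :=
      mul_le_mul_of_nonneg_left hb (abs_nonneg (c k))
    rw [div_le_div_iff₀ hγ hγ]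
    exact mul_le_mul_of_nonneg_right hm hγ.le
  have key := hasDerivAt_tsum_of_isPreconnected
    (u := fun k : ℕ => |c k * (4*R) ^ k / gammaMu μ k|)
    (𝕜 := ℝ) (F := ℝ)
    (g := fun k t => c k * ((k:ℝ) * t ^ (k-1)) / gammaMu μ k)
    (g' := fun k t => c k * ((k:ℝ) * (((k-1:ℕ):ℝ) * t ^ (k-1-1))) / gammaMu μ k)
    (t := Metric.ball (0:ℝ) R) (y₀ := t₀) (y := t₀)
    (hQ (4*R)) Metric.isOpen_ball (convex_ball (0:ℝ) R).isPreconnected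
    ?_ ?_ ht₀ hsum0 ht₀
  · exact key
  · intro k t ht
    have h0 := (hasDerivAt_pow (k-1) t).const_mul (c k * (k:ℝ) / gammaMu μ k)
    have e1 : (fun y : ℝ => c k * (k:ℝ) / gammaMu μ k * y ^ (k-1))
        = fun y : ℝ => c k * ((k:ℝ) * y ^ (k-1)) / gammaMu μ k := by funext y; ring
    have e2 : c k * (k:ℝ) / gammaMu μ k * (((k-1:ℕ):ℝ) * t ^ (k-1-1))
        = c k * ((k:ℝ) * (((k-1:ℕ):ℝ) * t ^ (k-1-1))) / gammaMu μ k := by ring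
    rw [e1, e2] at h0
    exact h0
  · intro k t ht
    simp only [Metric.mem_ball, Real.dist_eq, sub_zero] at ht
    have hγ := gammaMu_pos hμ k
    rw [Real.norm_eq_abs, abs_div, abs_mul, abs_of_pos hγ, abs_mul,
      abs_of_nonneg (Nat.cast_nonneg (α := ℝ) k), abs_mul,
      abs_of_nonneg (Nat.cast_nonneg (α := ℝ) (k-1)), abs_pow]
    show |c k| * ((k:ℝ) * (((k-1:ℕ):ℝ) * |t| ^ (k-1-1))) / gammaMu μ k
        ≤ |c k * (4*R)^k / gammaMu μ k|
    have habs : |c k * (4*R)^k / gammaMu μ k| = |c k| * (4*R)^k / gammaMu μ k := by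
      rw [abs_div, abs_mul, abs_of_pos hγ, abs_of_pos (by positivity : (0:ℝ) < (4*R)^k)]
    rw [habs]
    have hb : (k:ℝ) * (((k-1:ℕ):ℝ) * |t| ^ (k-1-1)) ≤ (4*R)^k := by
      have h1 : |t| ^ (k-1-1) ≤ R ^ (k-1-1) := pow_le_pow_left₀ (abs_nonneg t) ht.le _
      have h2 : R ^ (k-1-1) ≤ R ^ k := pow_le_pow_right₀ hR1 (le_trans (Nat.sub_le _ 1) (Nat.sub_le k 1))
      have h3 : (k:ℝ) ≤ 2^k := by exact_mod_cast (Nat.lt_two_pow_self (n := k)).le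
      have h4 : ((k-1:ℕ):ℝ) ≤ 2^k := by
        have : ((k-1:ℕ):ℝ) ≤ (k:ℝ) := by exact_mod_cast Nat.sub_le k 1
        linarith
      calc (k:ℝ) * (((k-1:ℕ):ℝ) * |t| ^ (k-1-1))
          ≤ (k:ℝ) * (((k-1:ℕ):ℝ) * R ^ (k-1-1)) := by
            apply mul_le_mul_of_nonneg_left _ (Nat.cast_nonneg k)
            exact mul_le_mul_of_nonneg_left h1 (Nat.cast_nonneg _)
        _ ≤ 2^k * (2^k * R ^ k) := by
            apply mul_le_mul h3 _ (by positivity) (by positivity)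
            exact mul_le_mul h4 h2 (by positivity) (by positivity)
        _ = (4*R)^k := by rw [mul_pow, show (4:ℝ) = 2*2 by norm_num, mul_pow]; ring
    have hm : |c k| * ((k:ℝ) * (((k-1:ℕ):ℝ) * |t| ^ (k-1-1))) ≤ |c k| * (4*R)^k :=
      mul_le_mul_of_nonneg_left hb (abs_nonneg (c k))
    rw [div_le_div_iff₀ hγ hγ]
    exact mul_le_mul_of_nonneg_right hm hγ.le

lemma deriv_Qf_eq (hμ : 0 ≤ μ)
    (hQ : ∀ t : ℝ, Summable fun i : ℕ => |c i * t ^ i / gammaMu μ i|) :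
    deriv (Qf μ c) = fun t : ℝ => ∑' k : ℕ, c k * ((k:ℝ) * t ^ (k-1)) / gammaMu μ k :=
  funext fun t => (hasDerivAt_Qf hμ hQ t).deriv

lemma deriv_Qf_one (hμ : 0 ≤ μ)
    (hQ : ∀ t : ℝ, Summable fun i : ℕ => |c i * t ^ i / gammaMu μ i|) :
    deriv (Qf μ c) 1 = Dc μ c := by
  rw [deriv_Qf_eq hμ hQ]
  unfold Dc
  exact tsum_congr fun k => by rw [one_pow]; ring

lemma deriv_Qf_negone (hμ : 0 ≤ μ)
    (hQ : ∀ t : ℝ, Summable fun i : ℕ => |c i * t ^ i / gammaMu μ i|) :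
    deriv (Qf μ c) (-1) = - Dm μ c := by
  rw [deriv_Qf_eq hμ hQ]
  show (∑' k : ℕ, c k * ((k:ℝ) * (-1:ℝ) ^ (k-1)) / gammaMu μ k) = - Dm μ c
  have hpt : ∀ k : ℕ, c k * ((k:ℝ) * (-1:ℝ) ^ (k-1)) / gammaMu μ k
      = -((k:ℝ) * c k * (-1:ℝ)^k / gammaMu μ k) := by
    intro k
    cases k with
    | zero => simp
    | succ m =>
      simp only [Nat.add_sub_cancel, pow_succ]
      ring
  rw [tsum_congr hpt, tsum_neg]
  rfl

lemma deriv_deriv_Qf_one (hμ : 0 ≤ μ)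
    (hQ : ∀ t : ℝ, Summable fun i : ℕ => |c i * t ^ i / gammaMu μ i|) :
    deriv (deriv (Qf μ c)) 1 = Dc2 μ c := by
  rw [deriv_Qf_eq hμ hQ]
  rw [(hasDerivAt_Qf' hμ hQ 1).deriv]
  unfold Dc2
  refine tsum_congr fun k => ?_
  cases k with
  | zero => simp
  | succ m =>
    rw [one_pow]
    push_cast [Nat.add_sub_cancel]
    ring

lemma dunklOp_Qf_one (hμ : 0 ≤ μ)
    (hQ : ∀ t : ℝ, Summable fun i : ℕ => |c i * t ^ i / gammaMu μ i|) :
    dunklOp μ (Qf μ c) 1 = Dc μ c + μ * (Qf μ c 1 - Qf μ c (-1)) := by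
  unfold dunklOp
  rw [deriv_Qf_one hμ hQ]
  ring

lemma dunklOp_Qf_negone (hμ : 0 ≤ μ)
    (hQ : ∀ t : ℝ, Summable fun i : ℕ => |c i * t ^ i / gammaMu μ i|) :
    dunklOp μ (Qf μ c) (-1) = - Dm μ c + μ * (Qf μ c 1 - Qf μ c (-1)) := by
  unfold dunklOp
  rw [deriv_Qf_negone hμ hQ, neg_neg]
  ring

lemma dunklOp_derivQf_one (hμ : 0 ≤ μ)
    (hQ : ∀ t : ℝ, Summable fun i : ℕ => |c i * t ^ i / gammaMu μ i|) :
    dunklOp μ (deriv (Qf μ c)) 1 = Dc2 μ c + μ * (Dc μ c + Dm μ c) := by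
  unfold dunklOp
  rw [deriv_deriv_Qf_one hμ hQ, deriv_Qf_one hμ hQ, deriv_Qf_negone hμ hQ]
  ring

lemma hasDerivAt_dunklOp_Qf (hμ : 0 ≤ μ)
    (hQ : ∀ t : ℝ, Summable fun i : ℕ => |c i * t ^ i / gammaMu μ i|) :
    HasDerivAt (dunklOp μ (Qf μ c))
      (Dc2 μ c + μ * ((Dc μ c - Dm μ c) - (Qf μ c 1 - Qf μ c (-1)))) 1 := by
  have h1 : HasDerivAt (deriv (Qf μ c)) (Dc2 μ c) 1 := by
    rw [deriv_Qf_eq hμ hQ]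
    have h := hasDerivAt_Qf' hμ hQ 1
    have e : (∑' k : ℕ, c k * ((k:ℝ) * (((k-1:ℕ):ℝ) * (1:ℝ) ^ (k-1-1))) / gammaMu μ k)
        = Dc2 μ c := by
      unfold Dc2
      refine tsum_congr fun k => ?_
      cases k with
      | zero => simp
      | succ m =>
        rw [one_pow]
        push_cast [Nat.add_sub_cancel]
        ring
    rwa [e] at h
  have hq1 := hasDerivAt_Qf hμ hQ 1
  have hq1' : HasDerivAt (Qf μ c) (Dc μ c) 1 := by
    have e : (∑' k : ℕ, c k * ((k:ℝ) * (1:ℝ) ^ (k-1)) / gammaMu μ k) = Dc μ c := by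
      unfold Dc; exact tsum_congr fun k => by rw [one_pow]; ring
    rwa [e] at hq1
  have hqm := hasDerivAt_Qf hμ hQ (-1)
  have hqm' : HasDerivAt (Qf μ c) (- Dm μ c) (-1) := by
    have e : (∑' k : ℕ, c k * ((k:ℝ) * (-1:ℝ) ^ (k-1)) / gammaMu μ k) = - Dm μ c := by
      have hpt : ∀ k : ℕ, c k * ((k:ℝ) * (-1:ℝ) ^ (k-1)) / gammaMu μ k
          = -((k:ℝ) * c k * (-1:ℝ)^k / gammaMu μ k) := by
        intro k
        cases k with
        | zero => simp
        | succ m =>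
          simp only [Nat.add_sub_cancel, pow_succ]
          ring
      rw [tsum_congr hpt, tsum_neg]; rfl
    rwa [e] at hqm
  have hneg : HasDerivAt (fun t : ℝ => Qf μ c (-t)) (Dm μ c) 1 := by
    have h := hqm'.comp 1 ((hasDerivAt_id (1:ℝ)).neg)
    simpa [Function.comp_def] using h
  have hN : HasDerivAt (fun t : ℝ => Qf μ c t - Qf μ c (-t)) (Dc μ c - Dm μ c) 1 :=
    hq1'.sub hneg
  have hQuot : HasDerivAt (fun t : ℝ => μ * (Qf μ c t - Qf μ c (-t)) / t)
      (μ * ((Dc μ c - Dm μ c) - (Qf μ c 1 - Qf μ c (-1)))) 1 := by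
    have hDen : HasDerivAt (fun t : ℝ => t) (1:ℝ) 1 := hasDerivAt_id 1
    have := (hN.const_mul μ).div hDen one_ne_zero
    exact this.congr_deriv (by ring)
  have := h1.add hQuot
  exact this.congr_deriv (by ring)

lemma deriv_dunklOp_Qf_one (hμ : 0 ≤ μ)
    (hQ : ∀ t : ℝ, Summable fun i : ℕ => |c i * t ^ i / gammaMu μ i|) :
    deriv (dunklOp μ (Qf μ c)) 1
      = Dc2 μ c + μ * ((Dc μ c - Dm μ c) - (Qf μ c 1 - Qf μ c (-1))) :=
  (hasDerivAt_dunklOp_Qf hμ hQ).deriv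

lemma dunklOp_dunklOp_Qf_one (hμ : 0 ≤ μ)
    (hQ : ∀ t : ℝ, Summable fun i : ℕ => |c i * t ^ i / gammaMu μ i|) :
    dunklOp μ (dunklOp μ (Qf μ c)) 1
      = Dc2 μ c + μ * ((Dc μ c - Dm μ c) - (Qf μ c 1 - Qf μ c (-1)))
        + μ * (Dc μ c + Dm μ c) := by
  rw [show dunklOp μ (dunklOp μ (Qf μ c)) 1
      = deriv (dunklOp μ (Qf μ c)) 1
        + μ * (dunklOp μ (Qf μ c) 1 - dunklOp μ (Qf μ c) (-1)) / 1 from rfl]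
  rw [deriv_dunklOp_Qf_one hμ hQ, dunklOp_Qf_one hμ hQ, dunklOp_Qf_negone hμ hQ]
  ring

end Aux6
section Aux7
variable {μ : ℝ}

lemma w_add (μ : ℝ) (j k : ℕ) :
    wMu μ (j + k) = wMu μ j + wMu μ k - 4*μ*(thetaFn j * thetaFn k) := by
  unfold wMu
  rw [theta_add]
  push_cast
  ring

lemma w_add_sq (μ : ℝ) (j k : ℕ) :
    wMu μ (j + k) ^ 2
      = wMu μ j^2 + 2*(wMu μ j*wMu μ k) + wMu μ k^2
        - 8*μ*(thetaFn j*wMu μ j*thetaFn k) - 8*μ*(thetaFn j*(thetaFn k*wMu μ k))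
        + 16*μ^2*(thetaFn j*thetaFn k) := by
  rw [w_add]
  linear_combination (16*μ^2*(thetaFn k*thetaFn k)) * theta_sq j
    + (16*μ^2*thetaFn j) * theta_sq k

lemma qPoly_div (hμ : 0 ≤ μ) (c : ℕ → ℝ) (y : ℝ) (i : ℕ) :
    qPoly μ c i y / gammaMu μ i
      = ∑ j ∈ Finset.range (i+1),
          (y^j / gammaMu μ j) * (c (i-j) / gammaMu μ (i-j)) := by
  unfold qPoly
  rw [Finset.sum_div]
  refine Finset.sum_congr rfl fun j hj => ?_
  have h1 := (gammaMu_pos hμ i).ne'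
  have h2 := (gammaMu_pos hμ j).ne'
  have h3 := (gammaMu_pos hμ (i-j)).ne'
  field_simp

lemma summand_eq (hμ : 0 ≤ μ) (c : ℕ → ℝ) (y : ℝ) (i : ℕ) :
    qPoly μ c i y / gammaMu μ i * wMu μ i ^ 2
      = (∑ j ∈ Finset.range (i+1),
            (wMu μ j^2*(y^j/gammaMu μ j)) * (c (i-j)/gammaMu μ (i-j)))
        + 2 * (∑ j ∈ Finset.range (i+1),
            (wMu μ j*(y^j/gammaMu μ j)) * (wMu μ (i-j)*(c (i-j)/gammaMu μ (i-j))))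
        + (∑ j ∈ Finset.range (i+1),
            (y^j/gammaMu μ j) * (wMu μ (i-j)^2*(c (i-j)/gammaMu μ (i-j))))
        - 8*μ * (∑ j ∈ Finset.range (i+1),
            (thetaFn j*wMu μ j*(y^j/gammaMu μ j)) * (thetaFn (i-j)*(c (i-j)/gammaMu μ (i-j))))
        - 8*μ * (∑ j ∈ Finset.range (i+1),
            (thetaFn j*(y^j/gammaMu μ j)) * (thetaFn (i-j)*wMu μ (i-j)*(c (i-j)/gammaMu μ (i-j))))
        + 16*μ^2 * (∑ j ∈ Finset.range (i+1),
            (thetaFn j*(y^j/gammaMu μ j)) * (thetaFn (i-j)*(c (i-j)/gammaMu μ (i-j)))) := by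
  rw [qPoly_div hμ c y i, Finset.sum_mul]
  have hpt : ∀ j ∈ Finset.range (i+1),
      (y^j / gammaMu μ j) * (c (i-j) / gammaMu μ (i-j)) * wMu μ i ^ 2
        = (wMu μ j^2*(y^j/gammaMu μ j)) * (c (i-j)/gammaMu μ (i-j))
          + 2 * ((wMu μ j*(y^j/gammaMu μ j)) * (wMu μ (i-j)*(c (i-j)/gammaMu μ (i-j))))
          + (y^j/gammaMu μ j) * (wMu μ (i-j)^2*(c (i-j)/gammaMu μ (i-j)))
          - 8*μ * ((thetaFn j*wMu μ j*(y^j/gammaMu μ j)) * (thetaFn (i-j)*(c (i-j)/gammaMu μ (i-j))))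
          - 8*μ * ((thetaFn j*(y^j/gammaMu μ j)) * (thetaFn (i-j)*wMu μ (i-j)*(c (i-j)/gammaMu μ (i-j))))
          + 16*μ^2 * ((thetaFn j*(y^j/gammaMu μ j)) * (thetaFn (i-j)*(c (i-j)/gammaMu μ (i-j)))) := by
    intro j hj
    have hji : j ≤ i := Nat.lt_succ_iff.mp (Finset.mem_range.mp hj)
    obtain ⟨k, hk⟩ : ∃ k, i = j + k := ⟨i - j, (Nat.add_sub_cancel' hji).symm⟩
    subst hk
    rw [Nat.add_sub_cancel_left, w_add_sq]
    ring
  rw [Finset.sum_congr rfl hpt]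
  simp only [Finset.sum_add_distrib, Finset.sum_sub_distrib, ← Finset.mul_sum]

end Aux7
/-- the second moment of K_n^μ. -/
theorem Kop_second_moment (μ : ℝ) (hμ : 0 ≤ μ) (c : ℕ → ℝ) (hc0 : c 0 ≠ 0)
    (hQ : ∀ t : ℝ, Summable fun i : ℕ => |c i * t ^ i / gammaMu μ i|)
    (hq : ∀ i : ℕ, ∀ x : ℝ, 0 ≤ x → 0 ≤ qPoly μ c i x)
    (hQ1 : 0 < Qf μ c 1)
    (n : ℕ) (hn : 1 ≤ n) (x : ℝ) (hx : 0 ≤ x) :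
    Kop μ c n (fun ξ => ξ ^ 2) x =
      x ^ 2 +
        (dunklExp μ (n * x) * (2 * deriv (Qf μ c) 1 + Qf μ c 1) +
            2 * μ * Qf μ c (-1) * dunklExp μ (-(n * x))) * x /
          (Qf μ c 1 * n * dunklExp μ (n * x)) +
        dunklOp μ (Qf μ c) 1 * dunklExp μ (-(n * x)) /
          (Qf μ c 1 * n ^ 2 * dunklExp μ (n * x)) +
        (2 * deriv (deriv (Qf μ c)) 1 - deriv (dunklOp μ (Qf μ c)) 1 -
            dunklOp μ (deriv (Qf μ c)) 1 + deriv (Qf μ c) 1 - 2 * μ * deriv (Qf μ c) (-1)) *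
          (dunklExp μ (n * x) - dunklExp μ (-(n * x))) /
          (Qf μ c 1 * n ^ 2 * dunklExp μ (n * x)) +
        (dunklOp μ (dunklOp μ (Qf μ c)) 1 + 2 * μ * dunklOp μ (Qf μ c) (-1)) /
          (Qf μ c 1 * n ^ 2) := by
  have hnpos : (0:ℝ) < (n:ℝ) := by exact_mod_cast Nat.lt_of_lt_of_le Nat.zero_lt_one hn
  have hn0 : ((n:ℝ)) ≠ 0 := hnpos.ne'
  set y : ℝ := (n:ℝ) * x with hy
  have hy0 : 0 ≤ y := mul_nonneg (Nat.cast_nonneg n) hx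
  have hQ1ne : Qf μ c 1 ≠ 0 := hQ1.ne'
  -- positivity of the Dunkl exponential at y
  have hEpos : 0 < dunklExp μ y := by
    have hEsum := summable_u0 hμ y
    have h0 : (0:ℝ) ≤ ∑' j : ℕ, y^(j+1)/gammaMu μ (j+1) :=
      tsum_nonneg fun j => div_nonneg (pow_nonneg hy0 _) (gammaMu_pos hμ _).le
    have hsplit : dunklExp μ y = y^0/gammaMu μ 0 + ∑' j : ℕ, y^(j+1)/gammaMu μ (j+1) :=
      Summable.tsum_eq_zero_add hEsum
    rw [hsplit, pow_zero, gammaMu_zero hμ, div_one]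
    linarith
  have hEne : dunklExp μ y ≠ 0 := hEpos.ne'
  -- norm-summability of the b-side sequences
  have nu0 : Summable fun j : ℕ => ‖y^j/gammaMu μ j‖ := by
    simpa only [Real.norm_eq_abs] using summable_abs_u0 hμ y
  have nu1 : Summable fun j : ℕ => ‖wMu μ j * (y^j/gammaMu μ j)‖ := by
    simpa only [Real.norm_eq_abs] using summable_abs_u1 hμ y
  have nu2 : Summable fun j : ℕ => ‖wMu μ j ^ 2 * (y^j/gammaMu μ j)‖ := by
    simpa only [Real.norm_eq_abs] using summable_abs_u2 hμ y
  have nuth : Summable fun j : ℕ => ‖thetaFn j * (y^j/gammaMu μ j)‖ := by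
    simpa only [Real.norm_eq_abs] using summable_abs_utheta hμ y
  have nuthw : Summable fun j : ℕ => ‖thetaFn j * wMu μ j * (y^j/gammaMu μ j)‖ := by
    simpa only [Real.norm_eq_abs] using summable_abs_uthetaw hμ y
  -- norm-summability of the c-side sequences
  have nv0 : Summable fun k : ℕ => ‖c k/gammaMu μ k‖ := by
    have h := hQ 1
    simp only [one_pow, mul_one] at h
    simpa only [Real.norm_eq_abs] using h
  have nv1 : Summable fun k : ℕ => ‖wMu μ k * (c k/gammaMu μ k)‖ := by
    simpa only [Real.norm_eq_abs] using summable_abs_weightC hμ hQ (sv_w hμ)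
  have nv2 : Summable fun k : ℕ => ‖wMu μ k ^ 2 * (c k/gammaMu μ k)‖ := by
    simpa only [Real.norm_eq_abs] using summable_abs_weightC hμ hQ (sv_w2 hμ)
  have nvth : Summable fun k : ℕ => ‖thetaFn k * (c k/gammaMu μ k)‖ := by
    simpa only [Real.norm_eq_abs] using summable_abs_weightC hμ hQ (sv_th hμ)
  have nvthw : Summable fun k : ℕ => ‖thetaFn k * wMu μ k * (c k/gammaMu μ k)‖ := by
    simpa only [Real.norm_eq_abs] using summable_abs_weightC hμ hQ (sv_thw hμ)
  -- Cauchy products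
  have hC1 := tsum_mul_tsum_eq_tsum_sum_range_of_summable_norm nu2 nv0
  have hC2 := tsum_mul_tsum_eq_tsum_sum_range_of_summable_norm nu1 nv1
  have hC3 := tsum_mul_tsum_eq_tsum_sum_range_of_summable_norm nu0 nv2
  have hC4 := tsum_mul_tsum_eq_tsum_sum_range_of_summable_norm nuthw nvth
  have hC5 := tsum_mul_tsum_eq_tsum_sum_range_of_summable_norm nuth nvthw
  have hC6 := tsum_mul_tsum_eq_tsum_sum_range_of_summable_norm nuth nvth
  -- summability of the coefficientwise products
  have sA1 := (summable_norm_sum_mul_range_of_summable_norm nu2 nv0).of_norm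
  have sA2 := (summable_norm_sum_mul_range_of_summable_norm nu1 nv1).of_norm
  have sA3 := (summable_norm_sum_mul_range_of_summable_norm nu0 nv2).of_norm
  have sA4 := (summable_norm_sum_mul_range_of_summable_norm nuthw nvth).of_norm
  have sA5 := (summable_norm_sum_mul_range_of_summable_norm nuth nvthw).of_norm
  have sA6 := (summable_norm_sum_mul_range_of_summable_norm nuth nvth).of_norm
  -- main series computation
  have key : ∑' i : ℕ, qPoly μ c i y / gammaMu μ i * wMu μ i ^ 2
      = (∑' j : ℕ, wMu μ j^2*(y^j/gammaMu μ j)) * (∑' k : ℕ, c k/gammaMu μ k)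
        + 2*((∑' j : ℕ, wMu μ j*(y^j/gammaMu μ j)) * (∑' k : ℕ, wMu μ k*(c k/gammaMu μ k)))
        + (∑' j : ℕ, y^j/gammaMu μ j) * (∑' k : ℕ, wMu μ k^2*(c k/gammaMu μ k))
        - 8*μ*((∑' j : ℕ, thetaFn j*wMu μ j*(y^j/gammaMu μ j))
            * (∑' k : ℕ, thetaFn k*(c k/gammaMu μ k)))
        - 8*μ*((∑' j : ℕ, thetaFn j*(y^j/gammaMu μ j))
            * (∑' k : ℕ, thetaFn k*wMu μ k*(c k/gammaMu μ k)))
        + 16*μ^2*((∑' j : ℕ, thetaFn j*(y^j/gammaMu μ j))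
            * (∑' k : ℕ, thetaFn k*(c k/gammaMu μ k))) := by
    have e1 : (fun i : ℕ => qPoly μ c i y / gammaMu μ i * wMu μ i ^ 2)
        = fun i : ℕ =>
          (∑ j ∈ Finset.range (i+1),
              (wMu μ j^2*(y^j/gammaMu μ j)) * (c (i-j)/gammaMu μ (i-j)))
          + 2 * (∑ j ∈ Finset.range (i+1),
              (wMu μ j*(y^j/gammaMu μ j)) * (wMu μ (i-j)*(c (i-j)/gammaMu μ (i-j))))
          + (∑ j ∈ Finset.range (i+1),
              (y^j/gammaMu μ j) * (wMu μ (i-j)^2*(c (i-j)/gammaMu μ (i-j))))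
          - 8*μ * (∑ j ∈ Finset.range (i+1),
              (thetaFn j*wMu μ j*(y^j/gammaMu μ j)) * (thetaFn (i-j)*(c (i-j)/gammaMu μ (i-j))))
          - 8*μ * (∑ j ∈ Finset.range (i+1),
              (thetaFn j*(y^j/gammaMu μ j)) * (thetaFn (i-j)*wMu μ (i-j)*(c (i-j)/gammaMu μ (i-j))))
          + 16*μ^2 * (∑ j ∈ Finset.range (i+1),
              (thetaFn j*(y^j/gammaMu μ j)) * (thetaFn (i-j)*(c (i-j)/gammaMu μ (i-j)))) :=
      funext (summand_eq hμ c y)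
    rw [e1]
    rw [Summable.tsum_add ((((sA1.add (sA2.mul_left 2)).add sA3).sub (sA4.mul_left (8*μ))).sub
        (sA5.mul_left (8*μ))) (sA6.mul_left (16*μ^2))]
    rw [Summable.tsum_sub (((sA1.add (sA2.mul_left 2)).add sA3).sub (sA4.mul_left (8*μ)))
        (sA5.mul_left (8*μ))]
    rw [Summable.tsum_sub ((sA1.add (sA2.mul_left 2)).add sA3) (sA4.mul_left (8*μ))]
    rw [Summable.tsum_add (sA1.add (sA2.mul_left 2)) sA3]
    rw [Summable.tsum_add sA1 (sA2.mul_left 2)]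
    rw [tsum_mul_left, tsum_mul_left, tsum_mul_left, tsum_mul_left]
    rw [← hC1, ← hC2, ← hC3, ← hC4, ← hC5, ← hC6]
  -- unfold the operator
  have hKop : Kop μ c n (fun ξ => ξ^2) x
      = 1 / (Qf μ c 1 * dunklExp μ y)
        * ∑' i : ℕ, qPoly μ c i y / gammaMu μ i * (((i:ℝ) + 2*μ*thetaFn i)/(n:ℝ))^2 := rfl
  have e2 : (fun i : ℕ => qPoly μ c i y / gammaMu μ i * (((i:ℝ) + 2*μ*thetaFn i)/(n:ℝ))^2)
      = fun i : ℕ => (1/(n:ℝ)^2) * (qPoly μ c i y / gammaMu μ i * wMu μ i ^ 2) := by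
    funext i
    unfold wMu
    field_simp
  rw [hKop, e2, tsum_mul_left, key]
  -- evaluate the individual series
  have hdE : (∑' j : ℕ, y^j/gammaMu μ j) = dunklExp μ y := rfl
  rw [sum_u1 hμ y, sum_u2 hμ y, sum_utheta hμ y, sum_uthetaw hμ y, hdE,
    sum_v0 hμ, sum_v1 hμ hQ, sum_v2 hμ hQ, sum_vtheta hμ hQ, sum_vthetaw hμ hQ]
  -- evaluate the derivative expressions on the right-hand side
  rw [deriv_Qf_one hμ hQ, deriv_Qf_negone hμ hQ, deriv_deriv_Qf_one hμ hQ,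
    dunklOp_dunklOp_Qf_one hμ hQ, deriv_dunklOp_Qf_one hμ hQ, dunklOp_derivQf_one hμ hQ,
    dunklOp_Qf_one hμ hQ, dunklOp_Qf_negone hμ hQ]
  rw [hy]
  have hEne' : dunklExp μ ((n:ℝ) * x) ≠ 0 := hEne
  field_simp
  ring
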